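/- Define ℱ(r) := (1/(D-1))·[1 + 2(D-2)·f(r)/(r f'(r))] - 1 for radiation fluid. If f(r) > 0 and f'(r) ≠ 0, then ℱ(r) = -((D-2)/(D-1))·(f(r) r^{-2})'/(f'(r) r^{-2}); in particular ℱ(r) = 0 iff (f(r)/r²)' = 0. -/

import Mathlib

/-- The radiation critical-point function `ℱ` is proportional to the photon
surface condition: `ℱ r = -((D-2)/(D-1)) · (f/r²)'(r) / (f'(r)/r²)`, so
`ℱ r = 0` iff `(f/r²)'(r) = 0`. -/
theorem radiation_F_photon_surface (D : ℕ) (hD : 3 ≤ D) (f : ℝ → ℝ) (r : ℝ)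
    (hr : 0 < r) (hf : DifferentiableAt ℝ f r) (hfr : 0 < f r)
    (hf' : deriv f r ≠ 0) :
    ((1 : ℝ) / ((D : ℝ) - 1))
        * (1 + 2 * ((D : ℝ) - 2) * (f r / (r * deriv f r))) - 1
      = -(((D : ℝ) - 2) / ((D : ℝ) - 1))
          * (deriv (fun s : ℝ => f s / s ^ 2) r / (deriv f r / r ^ 2)) ∧
    (((1 : ℝ) / ((D : ℝ) - 1))
        * (1 + 2 * ((D : ℝ) - 2) * (f r / (r * deriv f r))) - 1 = 0
      ↔ deriv (fun s : ℝ => f s / s ^ 2) r = 0) := by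
  have hr0 : r ≠ 0 := ne_of_gt hr
  have hr2 : (r : ℝ) ^ 2 ≠ 0 := pow_ne_zero _ hr0
  have hD3 : (3 : ℝ) ≤ (D : ℝ) := by exact_mod_cast hD
  have hD1 : (D : ℝ) - 1 ≠ 0 := by nlinarith
  have hD2 : (D : ℝ) - 2 ≠ 0 := by nlinarith
  have hg : DifferentiableAt ℝ (fun s : ℝ => (s : ℝ) ^ 2) r := by
    fun_prop
  have hd : deriv (fun s : ℝ => f s / s ^ 2) r
      = (deriv f r * r ^ 2 - f r * (2 * r)) / (r ^ 2) ^ 2 := by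
    rw [deriv_fun_div hf hg hr2]
    simp [deriv_pow_field]
  have heq : ((1 : ℝ) / ((D : ℝ) - 1))
        * (1 + 2 * ((D : ℝ) - 2) * (f r / (r * deriv f r))) - 1
      = -(((D : ℝ) - 2) / ((D : ℝ) - 1))
          * (deriv (fun s : ℝ => f s / s ^ 2) r / (deriv f r / r ^ 2)) := by
    rw [hd]
    field_simp
    ring
  refine ⟨heq, ?_⟩
  rw [heq, hd]
  constructor
  · intro h
    have h2 : (deriv f r * r ^ 2 - f r * (2 * r)) / (r ^ 2) ^ 2 = 0 := by
      have hq : deriv f r / r ^ 2 ≠ 0 := div_ne_zero hf' hr2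
      have hc : -(((D : ℝ) - 2) / ((D : ℝ) - 1)) ≠ 0 := by
        simp [div_ne_zero hD2 hD1]
      have := mul_eq_zero.mp h
      rcases this with h | h
      · exact absurd h hc
      · exact (div_eq_zero_iff.mp h).resolve_right hq
    exact h2
  · intro h
    rw [h]
    simp
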